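/- arXiv:quant-ph/0206171 — 5 statements merged into one kernel-verified Lean document; each statement's English description precedes it below -/
import Mathlib

section
/- Let Γ be a real symmetric positive definite 2n×2n matrix with eigenvalues λ_1 ≤ λ_2 ≤ … ≤ λ_{2n}. Then for any real unit vectors ξ, ξ' satisfying ⟨ξ, Γ^{1/2} ξ'⟩ = 0, one has ⟨ξ, Γ ξ⟩ · ⟨ξ', Γ ξ'⟩ ≥ λ_1 λ_2. -/
open Matrix

section OldSqrt

open scoped ComplexOrder

/-- The old Mathlib `Matrix.PosSemidef.sqrt` (removed upstream), restated verbatim. -/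
noncomputable def Matrix.PosSemidef.sqrt {𝕜 : Type*} [RCLike 𝕜] {n : Type*} [Fintype n]
    [DecidableEq n] {A : Matrix n n 𝕜} (hA : A.PosSemidef) : Matrix n n 𝕜 :=
  hA.1.eigenvectorUnitary.1 * diagonal ((↑) ∘ (√·) ∘ hA.1.eigenvalues) *
  (star hA.1.eigenvectorUnitary : Matrix n n 𝕜)

end OldSqrt

private lemma symm_dot' {m : Type*} [Fintype m] {M : Matrix m m ℝ} (hM : M.IsSymm)
    (x y : m → ℝ) : x ⬝ᵥ M.mulVec y = M.mulVec x ⬝ᵥ y := by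
  rw [dotProduct_mulVec, ← mulVec_transpose, hM]

private lemma dot_self_nonneg' {m : Type*} [Fintype m] (x : m → ℝ) : 0 ≤ x ⬝ᵥ x :=
  Finset.sum_nonneg fun _ _ => mul_self_nonneg _

private lemma dot_self_pos' {m : Type*} [Fintype m] {x : m → ℝ} (hx : x ≠ 0) : 0 < x ⬝ᵥ x :=
  (dot_self_nonneg' x).lt_of_ne fun h => hx (dotProduct_self_eq_zero.mp h.symm)

private lemma cs' {m : Type*} [Fintype m] (x y : m → ℝ) :
    (x ⬝ᵥ y) ^ 2 ≤ (x ⬝ᵥ x) * (y ⬝ᵥ y) := by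
  simpa [dotProduct, sq] using Finset.sum_mul_sq_le_sq_mul_sq Finset.univ x y

/-- For a real symmetric positive definite matrix `Γ` with two smallest
eigenvalues `λ1 ≤ λ2` (characterized variationally via orthonormal eigenvectors), and any
real unit vectors `ξ, ξ'` with `⟨ξ, Γ^{1/2} ξ'⟩ = 0`, we have
`⟨ξ, Γ ξ⟩ ⟨ξ', Γ ξ'⟩ ≥ λ1 λ2`. -/
theorem quadratic_form_product_lower_bound (n : ℕ)
    (Γ : Matrix (Fin (2 * n)) (Fin (2 * n)) ℝ)
    (hΓ : Γ.IsSymm) (hΓpd : Γ.PosDef)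
    (lam1 lam2 : ℝ) (v1 v2 : Fin (2 * n) → ℝ)
    (hv1 : v1 ⬝ᵥ v1 = 1) (hv2 : v2 ⬝ᵥ v2 = 1) (hv12 : v1 ⬝ᵥ v2 = 0)
    (hev1 : Γ.mulVec v1 = lam1 • v1) (hev2 : Γ.mulVec v2 = lam2 • v2)
    (hmin1 : ∀ x : Fin (2 * n) → ℝ, x ⬝ᵥ x = 1 → lam1 ≤ x ⬝ᵥ Γ.mulVec x)
    (hmin2 : ∀ x : Fin (2 * n) → ℝ, x ⬝ᵥ x = 1 → x ⬝ᵥ v1 = 0 → lam2 ≤ x ⬝ᵥ Γ.mulVec x)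
    (ξ ξ' : Fin (2 * n) → ℝ) (hξ : ξ ⬝ᵥ ξ = 1) (hξ' : ξ' ⬝ᵥ ξ' = 1)
    (horth : ξ ⬝ᵥ (hΓpd.posSemidef.sqrt).mulVec ξ' = 0) :
    lam1 * lam2 ≤ (ξ ⬝ᵥ Γ.mulVec ξ) * (ξ' ⬝ᵥ Γ.mulVec ξ') := by
  set S := hΓpd.posSemidef.sqrt with hSdef
  have hSps : S.PosSemidef := by
    rw [hSdef, Matrix.PosSemidef.sqrt, Matrix.star_eq_conjTranspose]
    exact (posSemidef_diagonal_iff.mpr fun i => by simp [Real.sqrt_nonneg]).mul_mul_conjTranspose_same _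
  have hSsymm : S.IsSymm := by
    have h := hSps.1
    rw [Matrix.IsHermitian] at h
    simpa [Matrix.conjTranspose_eq_transpose_of_trivial, Matrix.IsSymm] using h
  have hmul : S * S = Γ := by
    have hsp := hΓpd.posSemidef.1.spectral_theorem
    rw [hSdef, Matrix.PosSemidef.sqrt]
    conv_rhs => rw [hsp]
    simp only [Unitary.conjStarAlgAut_apply]
    have hd : diagonal ((RCLike.ofReal : ℝ → ℝ) ∘ (√·) ∘ hΓpd.posSemidef.1.eigenvalues) * diagonal ((RCLike.ofReal : ℝ → ℝ) ∘ (√·) ∘ hΓpd.posSemidef.1.eigenvalues) = diagonal (RCLike.ofReal ∘ hΓpd.posSemidef.1.eigenvalues : Fin (2 * n) → ℝ) := by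
      rw [diagonal_mul_diagonal]
      congr 1; funext i
      simp [Real.mul_self_sqrt (hΓpd.posSemidef.eigenvalues_nonneg i)]
    rw [← hd]
    have hU' : (star hΓpd.posSemidef.1.eigenvectorUnitary : Matrix (Fin (2 * n)) (Fin (2 * n)) ℝ) * hΓpd.posSemidef.1.eigenvectorUnitary.1 = 1 := by
      exact Unitary.star_mul_self_of_mem hΓpd.posSemidef.1.eigenvectorUnitary.2
    simp only [Matrix.mul_assoc]
    rw [← Matrix.mul_assoc _ _ (diagonal _ * _), hU', Matrix.one_mul]
  -- positivity of quadratic form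
  have hpos : ∀ x : Fin (2 * n) → ℝ, x ≠ 0 → 0 < x ⬝ᵥ Γ.mulVec x := by
    intro x hx
    simpa using hΓpd.dotProduct_mulVec_pos hx
  -- lambda facts
  have hv1ne : v1 ≠ 0 := by
    intro h; rw [h] at hv1; simp at hv1
  have hv2ne : v2 ≠ 0 := by
    intro h; rw [h] at hv2; simp at hv2
  have hlam1 : 0 < lam1 := by
    have := hpos v1 hv1ne
    rwa [hev1, dotProduct_smul, smul_eq_mul, hv1, mul_one] at this
  have hlam2 : 0 < lam2 := by
    have := hpos v2 hv2ne
    rwa [hev2, dotProduct_smul, smul_eq_mul, hv2, mul_one] at this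
  have hle : lam1 ≤ lam2 := by
    have := hmin1 v2 hv2
    rwa [hev2, dotProduct_smul, smul_eq_mul, hv2, mul_one] at this
  -- quadratic form lower bound on v1-perp
  have hq2 : ∀ x : Fin (2 * n) → ℝ, x ⬝ᵥ v1 = 0 → lam2 * (x ⬝ᵥ x) ≤ x ⬝ᵥ Γ.mulVec x := by
    intro x hx
    rcases eq_or_ne x 0 with h | h
    · simp [h]
    · have hxx : 0 < x ⬝ᵥ x := dot_self_pos' h
      set r := Real.sqrt (x ⬝ᵥ x) with hr
      have hrpos : 0 < r := Real.sqrt_pos.mpr hxx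
      have hrr : r * r = x ⬝ᵥ x := Real.mul_self_sqrt hxx.le
      have h1 : (r⁻¹ • x) ⬝ᵥ (r⁻¹ • x) = 1 := by
        simp only [dotProduct_smul, smul_dotProduct, smul_eq_mul]
        field_simp
        all_goals linarith only [hrr]
      have h2 : (r⁻¹ • x) ⬝ᵥ v1 = 0 := by
        simp [smul_dotProduct, hx]
      have := hmin2 _ h1 h2
      rw [mulVec_smul] at this
      simp only [dotProduct_smul, smul_dotProduct, smul_eq_mul] at this
      have h3 : lam2 * (r * r) ≤ (r⁻¹ * (r⁻¹ * (x ⬝ᵥ Γ.mulVec x))) * (r * r) :=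
        mul_le_mul_of_nonneg_right this (by positivity)
      have h4 : (r⁻¹ * (r⁻¹ * (x ⬝ᵥ Γ.mulVec x))) * (r * r) = x ⬝ᵥ Γ.mulVec x := by
        field_simp
      rw [← hrr]
      linarith only [h3, h4]
  -- abbreviations
  set a := ξ ⬝ᵥ Γ.mulVec ξ with hadef
  set b := ξ' ⬝ᵥ Γ.mulVec ξ' with hbdef
  have hξne : ξ ≠ 0 := by intro h; rw [h] at hξ; simp at hξ
  have hξ'ne : ξ' ≠ 0 := by intro h; rw [h] at hξ'; simp at hξ'
  have hb : 0 < b := hpos ξ' hξ'ne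
  -- step: a ≥ lam1 α² + lam2 (1-α²)
  set α := ξ ⬝ᵥ v1 with hαdef
  have hA : lam1 * α ^ 2 + lam2 * (1 - α ^ 2) ≤ a := by
    set p := ξ - α • v1 with hpdef
    have hpv1 : p ⬝ᵥ v1 = 0 := by
      simp [hpdef, sub_dotProduct, smul_dotProduct, smul_eq_mul, hv1, ← hαdef]
    have hpp : p ⬝ᵥ p = 1 - α ^ 2 := by
      simp only [hpdef, sub_dotProduct, dotProduct_sub, dotProduct_smul, smul_dotProduct,
        smul_eq_mul, hξ, hv1]
      have : v1 ⬝ᵥ ξ = α := by rw [dotProduct_comm]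
      rw [this]
      ring
    have hsplit : a = p ⬝ᵥ Γ.mulVec p + lam1 * α ^ 2 := by
      have hξp : ξ = p + α • v1 := by simp [hpdef]
      have hΓp : Γ.mulVec ξ = Γ.mulVec p + α • (lam1 • v1) := by
        rw [hξp, mulVec_add, mulVec_smul, hev1]
      have hv1Γp : v1 ⬝ᵥ Γ.mulVec p = 0 := by
        rw [symm_dot' hΓ, hev1, smul_dotProduct, smul_eq_mul, dotProduct_comm, hpv1, mul_zero]
      rw [hadef, hΓp, hξp]
      have e1 : v1 ⬝ᵥ p = 0 := by rw [dotProduct_comm]; exact hpv1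
      simp only [add_dotProduct, dotProduct_add, smul_dotProduct, dotProduct_smul, smul_eq_mul,
        hv1, hv1Γp, hpv1, e1]
      ring
    have := hq2 p hpv1
    rw [hpp] at this
    linarith [hsplit]
  -- the unit vector u
  set sb := Real.sqrt b with hsb
  have hsbpos : 0 < sb := Real.sqrt_pos.mpr hb
  have hsbsq : sb * sb = b := Real.mul_self_sqrt hb.le
  set u := sb⁻¹ • (S.mulVec ξ') with hudef
  have hSxx : (S.mulVec ξ') ⬝ᵥ (S.mulVec ξ') = b := by
    rw [← symm_dot' hSsymm, mulVec_mulVec, hmul]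
  have huu : u ⬝ᵥ u = 1 := by
    simp only [hudef, dotProduct_smul, smul_dotProduct, smul_eq_mul, hSxx]
    field_simp
    all_goals linarith only [hsbsq]
  have hξu : ξ ⬝ᵥ u = 0 := by
    simp [hudef, dotProduct_smul, horth]
  -- the inverse matrix
  have hdet : IsUnit Γ.det := hΓpd.det_pos.ne'.isUnit
  set G := Γ⁻¹ with hGdef
  have hGΓ : G * Γ = 1 := Matrix.nonsing_inv_mul Γ hdet
  have hΓG : Γ * G = 1 := Matrix.mul_nonsing_inv Γ hdet
  have hGsymm : G.IsSymm := by
    rw [Matrix.IsSymm, hGdef, Matrix.transpose_nonsing_inv, hΓ]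
  -- commute
  have hSG : S * G = G * S := by
    have h1 : S * Γ = Γ * S := by rw [← hmul, mul_assoc, ← mul_assoc]
    calc S * G = (G * Γ) * (S * G) := by rw [hGΓ, one_mul]
      _ = G * (Γ * S) * G := by noncomm_ring
      _ = G * (S * Γ) * G := by rw [h1]
      _ = (G * S) * (Γ * G) := by noncomm_ring
      _ = G * S := by rw [hΓG, mul_one]
  set c := u ⬝ᵥ G.mulVec u with hcdef
  have hbc : b * c = 1 := by
    have hinner : (S.mulVec ξ') ⬝ᵥ G.mulVec (S.mulVec ξ') = 1 := by
      rw [← symm_dot' hSsymm, mulVec_mulVec, mulVec_mulVec, hSG, mul_assoc, hmul,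
        hGΓ, one_mulVec, hξ']
    rw [hcdef, hudef, mulVec_smul]
    simp only [dotProduct_smul, smul_dotProduct, smul_eq_mul, hinner]
    field_simp
    all_goals linarith only [hsbsq]
  have hcpos : 0 < c := by
    rcases mul_pos_iff.mp (hbc ▸ one_pos) with ⟨_, h⟩ | ⟨h, _⟩
    · exact h
    · linarith
  -- G v1
  have hGv1 : G.mulVec v1 = lam1⁻¹ • v1 := by
    have h1 : G.mulVec (Γ.mulVec v1) = v1 := by
      rw [mulVec_mulVec, hGΓ, one_mulVec]
    rw [hev1, mulVec_smul] at h1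
    have h2 := congrArg (fun z => lam1⁻¹ • z) h1
    simp only [smul_smul, inv_mul_cancel₀ hlam1.ne', one_smul] at h2
    exact h2
  -- decompose u
  set β := u ⬝ᵥ v1 with hβdef
  set w := u - β • v1 with hwdef
  have hwv1 : w ⬝ᵥ v1 = 0 := by
    simp [hwdef, sub_dotProduct, smul_dotProduct, smul_eq_mul, hv1, ← hβdef]
  have hww : w ⬝ᵥ w = 1 - β ^ 2 := by
    simp only [hwdef, sub_dotProduct, dotProduct_sub, dotProduct_smul, smul_dotProduct,
      smul_eq_mul, huu, hv1]
    have : v1 ⬝ᵥ u = β := by rw [dotProduct_comm]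
    rw [this]
    ring
  set y := G.mulVec w with hydef
  have hΓy : Γ.mulVec y = w := by
    rw [hydef, mulVec_mulVec, hΓG, one_mulVec]
  have hyv1 : y ⬝ᵥ v1 = 0 := by
    rw [hydef, ← symm_dot' hGsymm, hGv1, dotProduct_smul, smul_eq_mul, hwv1, mul_zero]
  set t := w ⬝ᵥ y with htdef
  have ht1 : t = y ⬝ᵥ Γ.mulVec y := by
    rw [hΓy, dotProduct_comm]
  have ht2 : lam2 * (y ⬝ᵥ y) ≤ t := ht1 ▸ hq2 y hyv1
  have hkey : lam2 * t ≤ 1 - β ^ 2 := by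
    rcases eq_or_ne y 0 with h | h
    · have : t = 0 := by simp [htdef, h]
      rw [this, mul_zero]
      have := dot_self_nonneg' w
      linarith [hww]
    · have hY : 0 < y ⬝ᵥ y := dot_self_pos' h
      have hCS : t ^ 2 ≤ (w ⬝ᵥ w) * (y ⬝ᵥ y) := cs' w y
      rw [hww] at hCS
      have ht0 : 0 < t := lt_of_lt_of_le (mul_pos hlam2 hY) ht2
      have h2 : (lam2 * t) * (y ⬝ᵥ y) ≤ (1 - β ^ 2) * (y ⬝ᵥ y) := by
        calc (lam2 * t) * (y ⬝ᵥ y) = (lam2 * (y ⬝ᵥ y)) * t := by ring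
          _ ≤ t * t := mul_le_mul_of_nonneg_right ht2 ht0.le
          _ = t ^ 2 := (sq t).symm
          _ ≤ (1 - β ^ 2) * (y ⬝ᵥ y) := hCS
      exact le_of_mul_le_mul_right h2 hY
  -- c expansion
  have hc2 : c = β ^ 2 * lam1⁻¹ + t := by
    have hu' : u = w + β • v1 := by simp [hwdef]
    have hGu : G.mulVec u = y + β • (lam1⁻¹ • v1) := by
      rw [hu', mulVec_add, mulVec_smul, hGv1, hydef]
    rw [hcdef, hGu, hu']
    have e2 : v1 ⬝ᵥ y = 0 := by rw [dotProduct_comm]; exact hyv1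
    simp only [add_dotProduct, dotProduct_add, dotProduct_smul, smul_dotProduct, smul_eq_mul,
      hv1, hwv1, e2, ← htdef]
    ring
  -- Bessel: α² + β² ≤ 1
  have hbessel : α ^ 2 + β ^ 2 ≤ 1 := by
    have h0 := dot_self_nonneg' (v1 - α • ξ - β • u)
    simp only [sub_dotProduct, dotProduct_sub, dotProduct_smul, smul_dotProduct, smul_eq_mul,
      hv1, hξ, huu] at h0
    have e1 : v1 ⬝ᵥ ξ = α := by rw [dotProduct_comm]
    have e2 : v1 ⬝ᵥ u = β := by rw [dotProduct_comm]
    have e3 : u ⬝ᵥ ξ = 0 := by rw [dotProduct_comm]; exact hξu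
    have e4 : u ⬝ᵥ v1 = β := hβdef.symm
    have e5 : ξ ⬝ᵥ v1 = α := hαdef.symm
    rw [e1, e2, e3, e4, e5, hξu] at h0
    nlinarith only [h0]
  -- final assembly
  have h5 : lam1 * lam2 * c ≤ a := by
    have hprod : 0 ≤ (lam2 - lam1) * (1 - α ^ 2 - β ^ 2) :=
      mul_nonneg (by linarith only [hle]) (by linarith only [hbessel])
    have hlk : lam1 * (lam2 * t) ≤ lam1 * (1 - β ^ 2) :=
      mul_le_mul_of_nonneg_left hkey hlam1.le
    have e : lam1 * lam2 * (β ^ 2 * lam1⁻¹ + t) = lam2 * β ^ 2 + lam1 * (lam2 * t) := by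
      field_simp
    rw [hc2, e]
    nlinarith only [hA, hprod, hlk]
  calc lam1 * lam2 = lam1 * lam2 * (c * b) := by
        rw [mul_comm c b, hbc, mul_one]
    _ = (lam1 * lam2 * c) * b := by ring
    _ ≤ a * b := mul_le_mul_of_nonneg_right h5 hb.le
end

section
/- In the lower bound ⟨ξ, Γ ξ⟩⟨ξ', Γ ξ'⟩ ≥ λ_1 λ_2 over real unit vectors with ⟨ξ, Γ^{1/2} ξ'⟩ = 0, equality is attained: for any angle φ, the vectors ξ = cos φ · v_1 + sin φ · v_2 and ξ' proportional to √λ_2 sin φ · v_1 − √λ_1 cos φ · v_2 (normalized), where v_1, v_2 are orthonormal eigenvectors for the two smallest eigenvalues λ_1, λ_2, satisfy ⟨ξ, Γ^{1/2} ξ'⟩ = 0 and ⟨ξ, Γ ξ⟩⟨ξ', Γ ξ'⟩ = λ_1 λ_2. -/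
open Matrix

lemma sqrt_eigenvec {m : ℕ} (Γ : Matrix (Fin m) (Fin m) ℝ) (hpd : Γ.PosDef)
    (lam : ℝ) (hlam : 0 < lam) (v : Fin m → ℝ) (hev : Γ.mulVec v = lam • v) :
    ((hpd.posSemidef.isHermitian.eigenvectorUnitary : Matrix (Fin m) (Fin m) ℝ) *
      diagonal (Real.sqrt ∘ hpd.posSemidef.isHermitian.eigenvalues) *
      (star hpd.posSemidef.isHermitian.eigenvectorUnitary : Matrix (Fin m) (Fin m) ℝ)).mulVec v
      = Real.sqrt lam • v := by
  set U := hpd.posSemidef.isHermitian.eigenvectorUnitary with hU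
  set B := (U : Matrix (Fin m) (Fin m) ℝ) *
      diagonal (Real.sqrt ∘ hpd.posSemidef.isHermitian.eigenvalues) *
      (star U : Matrix (Fin m) (Fin m) ℝ) with hBdef
  have hB : B.PosSemidef := by
    have hd : (diagonal (Real.sqrt ∘ hpd.posSemidef.isHermitian.eigenvalues)).PosSemidef :=
      posSemidef_diagonal_iff.mpr fun i => Real.sqrt_nonneg _
    have := hd.mul_mul_conjTranspose_same (U : Matrix (Fin m) (Fin m) ℝ)
    simpa [hBdef, Matrix.star_eq_conjTranspose] using this
  have hBB : B * B = Γ := by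
    have hev0 : 0 ≤ hpd.posSemidef.isHermitian.eigenvalues :=
      hpd.posSemidef.isHermitian.posSemidef_iff_eigenvalues_nonneg.mp hpd.posSemidef
    have hsp := hpd.posSemidef.isHermitian.spectral_theorem
    rw [Unitary.conjStarAlgAut_apply] at hsp
    conv_rhs => rw [hsp]
    have hUU : (star U : Matrix (Fin m) (Fin m) ℝ) * (U : Matrix (Fin m) (Fin m) ℝ) = 1 := by
      simp
    rw [hBdef]
    rw [show (U : Matrix (Fin m) (Fin m) ℝ) *
        diagonal (Real.sqrt ∘ hpd.posSemidef.isHermitian.eigenvalues) *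
        (star U : Matrix (Fin m) (Fin m) ℝ) * ((U : Matrix (Fin m) (Fin m) ℝ) *
        diagonal (Real.sqrt ∘ hpd.posSemidef.isHermitian.eigenvalues) *
        (star U : Matrix (Fin m) (Fin m) ℝ)) = (U : Matrix (Fin m) (Fin m) ℝ) *
        (diagonal (Real.sqrt ∘ hpd.posSemidef.isHermitian.eigenvalues) *
        ((star U : Matrix (Fin m) (Fin m) ℝ) * (U : Matrix (Fin m) (Fin m) ℝ)) *
        diagonal (Real.sqrt ∘ hpd.posSemidef.isHermitian.eigenvalues)) *
        (star U : Matrix (Fin m) (Fin m) ℝ) by simp only [Matrix.mul_assoc]]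
    rw [hUU, Matrix.mul_one, diagonal_mul_diagonal]
    congr 3
    funext i
    simp [Real.mul_self_sqrt (hev0 i)]
  set u : Fin m → ℝ := B.mulVec v - Real.sqrt lam • v with hu
  have hB2 : B.mulVec (B.mulVec v) = lam • v := by
    rw [mulVec_mulVec, hBB, hev]
  have hBu : B.mulVec u = (-Real.sqrt lam) • u := by
    rw [hu, mulVec_sub, hB2, mulVec_smul]
    have hsq2 : Real.sqrt lam ^ 2 = lam := Real.sq_sqrt hlam.le
    ext i
    simp [smul_smul]
    linear_combination (-(v i)) * hsq2
  have hnn : 0 ≤ u ⬝ᵥ B.mulVec u := by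
    have := hB.dotProduct_mulVec_nonneg u
    simpa using this
  have huu : u ⬝ᵥ B.mulVec u = -Real.sqrt lam * (u ⬝ᵥ u) := by
    rw [hBu, dotProduct_smul, smul_eq_mul]
  have hsq : 0 < Real.sqrt lam := Real.sqrt_pos.mpr hlam
  have huz : u ⬝ᵥ u = 0 := by
    have h1 : 0 ≤ u ⬝ᵥ u := Finset.sum_nonneg fun i _ => mul_self_nonneg (u i)
    nlinarith
  have : u = 0 := by
    rwa [dotProduct_self_eq_zero] at huz
  have := sub_eq_zero.mp this
  exact this

/-- Equality in the bound `⟨ξ,Γξ⟩⟨ξ',Γξ'⟩ ≥ λ1 λ2` is attained: for any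
angle `φ`, the vectors `ξ = cos φ • v1 + sin φ • v2` and the normalization of
`√λ2 sin φ • v1 − √λ1 cos φ • v2` satisfy `⟨ξ, Γ^{1/2} ξ'⟩ = 0` and
`⟨ξ,Γξ⟩⟨ξ',Γξ'⟩ = λ1 λ2`, where `v1, v2` are orthonormal eigenvectors of the two
smallest eigenvalues `λ1 ≤ λ2`. -/
theorem quadratic_form_product_lower_bound_attained (n : ℕ)
    (Γ : Matrix (Fin (2 * n)) (Fin (2 * n)) ℝ)
    (hΓ : Γ.IsSymm) (hΓpd : Γ.PosDef)
    (lam1 lam2 : ℝ) (v1 v2 : Fin (2 * n) → ℝ)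
    (hv1 : v1 ⬝ᵥ v1 = 1) (hv2 : v2 ⬝ᵥ v2 = 1) (hv12 : v1 ⬝ᵥ v2 = 0)
    (hev1 : Γ.mulVec v1 = lam1 • v1) (hev2 : Γ.mulVec v2 = lam2 • v2)
    (hmin1 : ∀ x : Fin (2 * n) → ℝ, x ⬝ᵥ x = 1 → lam1 ≤ x ⬝ᵥ Γ.mulVec x)
    (hmin2 : ∀ x : Fin (2 * n) → ℝ, x ⬝ᵥ x = 1 → x ⬝ᵥ v1 = 0 → lam2 ≤ x ⬝ᵥ Γ.mulVec x)
    (φ : ℝ)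
    (ξ ξ' : Fin (2 * n) → ℝ)
    (hξdef : ξ = Real.cos φ • v1 + Real.sin φ • v2)
    (hξ'def : ξ' = (Real.sqrt (lam2 * Real.sin φ ^ 2 + lam1 * Real.cos φ ^ 2))⁻¹ •
      ((Real.sqrt lam2 * Real.sin φ) • v1 - (Real.sqrt lam1 * Real.cos φ) • v2)) :
    ξ ⬝ᵥ ((hΓpd.posSemidef.isHermitian.eigenvectorUnitary : Matrix (Fin (2 * n)) (Fin (2 * n)) ℝ) *
      diagonal (Real.sqrt ∘ hΓpd.posSemidef.isHermitian.eigenvalues) *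
      (star hΓpd.posSemidef.isHermitian.eigenvectorUnitary : Matrix (Fin (2 * n)) (Fin (2 * n)) ℝ)).mulVec ξ' = 0 ∧
      (ξ ⬝ᵥ Γ.mulVec ξ) * (ξ' ⬝ᵥ Γ.mulVec ξ') = lam1 * lam2 := by
  have hv1ne : v1 ≠ 0 := by
    intro h; rw [h] at hv1; simp at hv1
  have hv2ne : v2 ≠ 0 := by
    intro h; rw [h] at hv2; simp at hv2
  have hlam1 : 0 < lam1 := by
    have := hΓpd.dotProduct_mulVec_pos hv1ne
    rw [hev1] at this
    simpa [dotProduct_smul, hv1] using this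
  have hlam2 : 0 < lam2 := by
    have := hΓpd.dotProduct_mulVec_pos hv2ne
    rw [hev2] at this
    simpa [dotProduct_smul, hv2] using this
  have hv21 : v2 ⬝ᵥ v1 = 0 := by rwa [dotProduct_comm]
  set s := Real.sin φ
  set c := Real.cos φ
  have h1 : s ^ 2 + c ^ 2 = 1 := Real.sin_sq_add_cos_sq φ
  have hD : 0 < lam2 * s ^ 2 + lam1 * c ^ 2 := by
    rcases le_total lam1 lam2 with h | h
    · nlinarith [sq_nonneg s, sq_nonneg c]
    · nlinarith [sq_nonneg s, sq_nonneg c]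
  set D := lam2 * s ^ 2 + lam1 * c ^ 2 with hDdef
  have hsqD : Real.sqrt D * Real.sqrt D = D := Real.mul_self_sqrt hD.le
  have hsqDne : Real.sqrt D ≠ 0 := ne_of_gt (Real.sqrt_pos.mpr hD)
  have hB1 := sqrt_eigenvec Γ hΓpd lam1 hlam1 v1 hev1
  have hB2 := sqrt_eigenvec Γ hΓpd lam2 hlam2 v2 hev2
  have hs1 : Real.sqrt lam1 * Real.sqrt lam1 = lam1 := Real.mul_self_sqrt hlam1.le
  have hs2 : Real.sqrt lam2 * Real.sqrt lam2 = lam2 := Real.mul_self_sqrt hlam2.le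
  constructor
  · rw [hξdef, hξ'def, mulVec_smul, mulVec_sub, mulVec_smul, mulVec_smul, hB1, hB2]
    simp only [dotProduct_smul, smul_dotProduct, add_dotProduct, dotProduct_sub,
      dotProduct_add, smul_eq_mul, hv1, hv2, hv12, hv21, smul_sub, smul_smul]
    ring
  · have hq1 : ξ ⬝ᵥ Γ.mulVec ξ = lam1 * c ^ 2 + lam2 * s ^ 2 := by
      rw [hξdef, mulVec_add, mulVec_smul, mulVec_smul, hev1, hev2]
      simp only [dotProduct_smul, smul_dotProduct, add_dotProduct, dotProduct_add,
        smul_eq_mul, hv1, hv2, hv12, hv21, smul_smul]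
      ring
    have hq2 : ξ' ⬝ᵥ Γ.mulVec ξ' = lam1 * lam2 / D := by
      rw [hξ'def, mulVec_smul, mulVec_sub, mulVec_smul, mulVec_smul, hev1, hev2]
      simp only [dotProduct_smul, smul_dotProduct, sub_dotProduct, dotProduct_sub,
        smul_eq_mul, hv1, hv2, hv12, hv21, smul_sub, smul_smul]
      rw [eq_div_iff hD.ne']
      field_simp
      rw [Real.sq_sqrt hD.le]
      linear_combination (s ^ 2 * lam1 * D) * hs2 + (c ^ 2 * lam2 * D) * hs1 + (lam1 * lam2 * D) * h1
    rw [hq1, hq2, hDdef]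
    field_simp
    rw [div_eq_one_iff_eq (ne_of_gt (by linarith))]
    ring
end

section
/- For any pair of orthogonal real unit vectors ξ, η in ℝ^4 (two modes), there exists a passive transformation K (real symplectic orthogonal 4×4 matrix) such that ⟨η, K σ̃ K^T ξ⟩ = 1, where σ̃ is the partially transposed symplectic matrix for the 1+1 mode split. -/
open Matrix
noncomputable section
namespace PassiveAux
abbrev n4 := Fin 2 ⊕ Fin 2
def Jm : Matrix n4 n4 ℝ := fromBlocks 0 1 (-1) 0
def Emat : Matrix (Fin 2) (Fin 2) ℝ := Matrix.diagonal ![1, -1]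
def Qm : Matrix n4 n4 ℝ := fromBlocks !![0,-1;1,0] 0 0 (-(!![0,-1;1,0]))
def St : Matrix n4 n4 ℝ := fromBlocks 0 Emat (-Emat) 0

lemma hJT : Jmᵀ = -Jm := by
  ext i j; rcases i with i|i <;> rcases j with j|j <;> simp [Jm, one_apply, eq_comm]
lemma hJJ : Jm * Jm = -1 := by
  ext i j
  rcases i with i|i <;> rcases j with j|j <;>
    simp [Jm, fromBlocks_multiply, ← fromBlocks_neg, ← fromBlocks_one]
lemma hQT : Qmᵀ = -Qm := by
  ext i j
  rcases i with i|i <;> rcases j with j|j <;> fin_cases i <;> fin_cases j <;> simp [Qm]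
lemma hQQ : Qmᵀ * Qm = 1 := by
  rw [hQT]
  ext i j
  rcases i with i|i <;> rcases j with j|j <;> fin_cases i <;> fin_cases j <;>
    simp [Qm, fromBlocks_multiply, ← fromBlocks_neg, ← fromBlocks_one,
      mul_apply, Fin.sum_univ_two, one_apply]
lemma hQJ : (Jm * Qm)ᵀ = -(Jm * Qm) := by
  ext i j
  rcases i with i|i <;> rcases j with j|j <;> fin_cases i <;> fin_cases j <;>
    simp [Qm, Jm, fromBlocks_multiply, ← fromBlocks_neg, mul_apply, Fin.sum_univ_two,
      one_apply]
lemma hst' : (fromBlocks 1 0 0 Emat) * Jm * (fromBlocks 1 0 0 Emat) = St := by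
  ext i j
  rcases i with i|i <;> rcases j with j|j <;> simp [Jm, St, fromBlocks_multiply]

lemma antisym_quad (A : Matrix n4 n4 ℝ) (h : Aᵀ = -A) (x : n4 → ℝ) :
    x ⬝ᵥ A.mulVec x = 0 := by
  have h1 : x ⬝ᵥ A.mulVec x = Aᵀ.mulVec x ⬝ᵥ x := by
    rw [dotProduct_mulVec, mulVec_transpose]
  rw [h, neg_mulVec, neg_dotProduct, dotProduct_comm] at h1
  rw [dotProduct_comm]; linarith
lemma dmv (A : Matrix n4 n4 ℝ) (x z : n4 → ℝ) :
    A.mulVec x ⬝ᵥ z = x ⬝ᵥ Aᵀ.mulVec z := by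
  rw [dotProduct_comm, dotProduct_mulVec, ← mulVec_transpose, dotProduct_comm]
lemma J_skew (x y : n4 → ℝ) : x ⬝ᵥ Jm.mulVec y = -(Jm.mulVec x ⬝ᵥ y) := by
  rw [dotProduct_mulVec, ← mulVec_transpose, hJT, neg_mulVec, neg_dotProduct]
lemma J_iso (x y : n4 → ℝ) : Jm.mulVec x ⬝ᵥ Jm.mulVec y = x ⬝ᵥ y := by
  rw [dotProduct_mulVec, ← mulVec_transpose, mulVec_mulVec, hJT, neg_mul, hJJ, neg_neg,
    one_mulVec]
lemma JJvec (x : n4 → ℝ) : Jm.mulVec (Jm.mulVec x) = -x := by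
  rw [mulVec_mulVec, hJJ, neg_mulVec, one_mulVec]

lemma vmv_mul_vmv (x y z w : n4 → ℝ) :
    vecMulVec x y * vecMulVec z w = (y ⬝ᵥ z) • vecMulVec x w := by
  ext i j
  simp only [mul_apply, vecMulVec_apply, Matrix.smul_apply, smul_eq_mul, dotProduct,
    Finset.sum_mul]
  exact Finset.sum_congr rfl fun k _ => by ring
lemma mul_vmv (A : Matrix n4 n4 ℝ) (x y : n4 → ℝ) :
    A * vecMulVec x y = vecMulVec (A.mulVec x) y := by
  ext i j
  simp only [mul_apply, vecMulVec_apply, mulVec, dotProduct, Finset.sum_mul]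
  exact Finset.sum_congr rfl fun k _ => by ring
lemma vmv_mul (A : Matrix n4 n4 ℝ) (x y : n4 → ℝ) :
    vecMulVec x y * A = vecMulVec x (Aᵀ.mulVec y) := by
  ext i j
  simp only [mul_apply, vecMulVec_apply, mulVec, dotProduct, transpose_apply, Finset.mul_sum]
  exact Finset.sum_congr rfl fun k _ => by ring
lemma transpose_vmv (x y : n4 → ℝ) : (vecMulVec x y)ᵀ = vecMulVec y x := by
  ext i j; simp [vecMulVec_apply, mul_comm]
lemma vmv_mulVec (x y z : n4 → ℝ) : (vecMulVec x y).mulVec z = (y ⬝ᵥ z) • x := by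
  funext i
  simp only [mulVec, vecMulVec_apply, dotProduct, Pi.smul_apply, smul_eq_mul, Finset.sum_mul]
  exact Finset.sum_congr rfl fun k _ => by ring
lemma vmv_neg_left (x y : n4 → ℝ) : vecMulVec (-x) y = -vecMulVec x y := by
  ext i j; simp [vecMulVec_apply]
lemma vmv_neg_right (x y : n4 → ℝ) : vecMulVec x (-y) = -vecMulVec x y := by
  ext i j; simp [vecMulVec_apply]

lemma dp_self_nonneg (v : n4 → ℝ) : 0 ≤ v ⬝ᵥ v :=
  Finset.sum_nonneg fun i _ => mul_self_nonneg _
end PassiveAux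
end

open PassiveAux in
set_option maxHeartbeats 2000000 in
/-- For any pair of orthogonal real unit vectors `ξ, η ∈ ℝ⁴` (two modes),
there exists a passive (real symplectic orthogonal) transformation `K` such that
`⟨η, K σ̃ Kᵀ ξ⟩ = 1`, where `σ̃` is the partially transposed symplectic matrix for the
`1+1` mode split. -/
theorem exists_passive_achieving_one
    (σ : Matrix (Fin 2 ⊕ Fin 2) (Fin 2 ⊕ Fin 2) ℝ)
    (hσ : σ = Matrix.fromBlocks 0 1 (-1) 0)
    (E : Matrix (Fin 2) (Fin 2) ℝ) (hE : E = Matrix.diagonal ![1, -1])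
    (σt : Matrix (Fin 2 ⊕ Fin 2) (Fin 2 ⊕ Fin 2) ℝ)
    (hσt : σt = (Matrix.fromBlocks 1 0 0 E) * σ * (Matrix.fromBlocks 1 0 0 E))
    (ξ η : Fin 2 ⊕ Fin 2 → ℝ)
    (hξ : ξ ⬝ᵥ ξ = 1) (hη : η ⬝ᵥ η = 1) (horth : η ⬝ᵥ ξ = 0) :
    ∃ K : Matrix (Fin 2 ⊕ Fin 2) (Fin 2 ⊕ Fin 2) ℝ,
      Kᵀ * σ * K = σ ∧ Kᵀ * K = 1 ∧ η ⬝ᵥ (K * σt * Kᵀ).mulVec ξ = 1 := by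
  have hσ' : σ = Jm := hσ
  have hσt' : σt = St := by rw [hσt, hσ', hE]; exact hst'
  subst hσ' hσt'
  clear hσ hσt hE
  -- basic dot products
  set t : ℝ := ξ ⬝ᵥ Jm.mulVec η with ht
  have d2 : Jm.mulVec η ⬝ᵥ ξ = t := dotProduct_comm _ _
  have d3 : Jm.mulVec η ⬝ᵥ Jm.mulVec η = 1 := by rw [J_iso]; exact hη
  have horth' : ξ ⬝ᵥ η = 0 := by rw [dotProduct_comm]; exact horth
  have d4 : Jm.mulVec ξ ⬝ᵥ Jm.mulVec η = 0 := by rw [J_iso]; exact horth'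
  have d5 : Jm.mulVec η ⬝ᵥ η = 0 := by
    rw [dotProduct_comm]; exact antisym_quad Jm hJT η
  have d6 : Jm.mulVec ξ ⬝ᵥ ξ = 0 := by
    rw [dotProduct_comm]; exact antisym_quad Jm hJT ξ
  have d7 : Jm.mulVec ξ ⬝ᵥ η = -t := by
    have := J_skew ξ η; linarith
  -- bounds on t
  have hb1 : (ξ - Jm.mulVec η) ⬝ᵥ (ξ - Jm.mulVec η) = 2 - 2 * t := by
    simp only [sub_dotProduct, dotProduct_sub, hξ, d2, d3, ← ht]; ring
  have hb2 : (ξ + Jm.mulVec η) ⬝ᵥ (ξ + Jm.mulVec η) = 2 + 2 * t := by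
    simp only [add_dotProduct, dotProduct_add, hξ, d2, d3, ← ht]; ring
  have ht1 : t ≤ 1 := by nlinarith [dp_self_nonneg (ξ - Jm.mulVec η)]
  have ht2 : -1 ≤ t := by nlinarith [dp_self_nonneg (ξ + Jm.mulVec η)]
  set c : ℝ := Real.sqrt ((1 + t) / 2) with hc
  set s1 : ℝ := Real.sqrt ((1 - t) / 2) with hs1
  set s : ℝ := 2 * c * s1 with hs
  have hc2 : c ^ 2 = (1 + t) / 2 := Real.sq_sqrt (by linarith)
  have hs12 : s1 ^ 2 = (1 - t) / 2 := Real.sq_sqrt (by linarith)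
  have hs2 : s ^ 2 = 1 - t ^ 2 := by
    have h4 : s ^ 2 = 4 * c ^ 2 * s1 ^ 2 := by rw [hs]; ring
    rw [h4, hc2, hs12]; ring
  have hct : c ^ 2 - s1 ^ 2 = t := by rw [hc2, hs12]; ring
  have hcs1 : c ^ 2 + s1 ^ 2 = 1 := by rw [hc2, hs12]; ring
  -- concrete vectors
  set a : n4 → ℝ := Sum.elim ![s1, c] ![0, 0] with ha
  set a2 : n4 → ℝ := Sum.elim ![(0:ℝ), 0] ![-s1, -c] with ha2
  set b : n4 → ℝ := Sum.elim ![-c, s1] ![0, 0] with hb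
  set b2 : n4 → ℝ := Sum.elim ![(0:ℝ), 0] ![c, -s1] with hb2v
  have hJa : Jm.mulVec a = a2 := by
    funext i
    rcases i with i|i <;> fin_cases i <;>
      simp [Jm, ha, ha2, mulVec, dotProduct, Fintype.sum_sum_type, Fin.sum_univ_two,
        fromBlocks, one_apply]
  have hJb : Jm.mulVec b = b2 := by
    funext i
    rcases i with i|i <;> fin_cases i <;>
      simp [Jm, hb, hb2v, mulVec, dotProduct, Fintype.sum_sum_type, Fin.sum_univ_two,
        fromBlocks, one_apply]
  have hJa2 : Jm.mulVec a2 = -a := by rw [← hJa, JJvec]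
  have hJb2 : Jm.mulVec b2 = -b := by rw [← hJb, JJvec]
  have hcomp : vecMulVec a a + vecMulVec a2 a2 + vecMulVec b b + vecMulVec b2 b2 = 1 := by
    ext i j
    rcases i with i|i <;> rcases j with j|j <;> fin_cases i <;> fin_cases j <;>
      simp [vecMulVec_apply, ha, ha2, hb, hb2v, one_apply] <;>
      linarith [hcs1]
  have hSta : St.mulVec a = Sum.elim ![(0:ℝ), 0] ![-s1, c] := by
    funext i
    rcases i with i|i <;> fin_cases i <;>
      simp [St, Emat, ha, mulVec, dotProduct, Fintype.sum_sum_type, Fin.sum_univ_two,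
        fromBlocks, diagonal]
  -- construct u
  have hu : ∃ u : n4 → ℝ, u ⬝ᵥ u = 1 ∧ ξ ⬝ᵥ u = 0 ∧ Jm.mulVec ξ ⬝ᵥ u = 0 ∧
      u ⬝ᵥ η = 0 ∧ Jm.mulVec u ⬝ᵥ η = -s := by
    by_cases hs0 : s = 0
    · -- degenerate case : t = ±1
      have htt : t ^ 2 = 1 := by nlinarith [hs2]
      have hz : Jm.mulVec η - t • ξ = 0 := by
        apply dotProduct_self_eq_zero.mp
        simp only [sub_dotProduct, dotProduct_sub, smul_dotProduct, dotProduct_smul,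
          smul_eq_mul, d3, d2, hξ]
        rw [← ht]
        ring_nf
        linarith [htt]
      have hJη : Jm.mulVec η = t • ξ := by rwa [sub_eq_zero] at hz
      have hJJη := JJvec η
      rw [hJη, mulVec_smul] at hJJη
      have hηval : η = -(t • Jm.mulVec ξ) := by rw [hJJη, neg_neg]
      have p3 : Jm.mulVec ξ ⬝ᵥ Qm.mulVec ξ = 0 := by
        rw [dmv, mulVec_mulVec, hJT, neg_mul, neg_mulVec, dotProduct_neg,
          ← mulVec_mulVec]
        have := antisym_quad (Jm * Qm) hQJ ξ
        rw [← mulVec_mulVec] at this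
        rw [this, neg_zero]
      have p2 : ξ ⬝ᵥ Qm.mulVec ξ = 0 := antisym_quad Qm hQT ξ
      refine ⟨Qm.mulVec ξ, ?_, p2, p3, ?_, ?_⟩
      · rw [dmv, mulVec_mulVec, hQQ, one_mulVec]; exact hξ
      · rw [hηval, dotProduct_neg, dotProduct_smul, smul_eq_mul, dotProduct_comm, p3,
          mul_zero, neg_zero]
      · rw [hηval, hs0, dotProduct_neg, dotProduct_smul, smul_eq_mul, J_iso,
          dotProduct_comm, p2, mul_zero, neg_zero]
    · -- generic case
      set w : n4 → ℝ := Jm.mulVec η - t • ξ with hw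
      have hww : w ⬝ᵥ w = 1 - t ^ 2 := by
        simp only [hw, sub_dotProduct, dotProduct_sub, smul_dotProduct, dotProduct_smul,
          smul_eq_mul, d3, d2, hξ]
        rw [← ht]; ring
      have hξw : ξ ⬝ᵥ w = 0 := by
        simp only [hw, dotProduct_sub, dotProduct_smul, smul_eq_mul, hξ]
        rw [← ht]; ring
      have hJξw : Jm.mulVec ξ ⬝ᵥ w = 0 := by
        simp only [hw, dotProduct_sub, dotProduct_smul, smul_eq_mul, d4, d6]; ring
      have hwη : w ⬝ᵥ η = 0 := by
        simp only [hw, sub_dotProduct, smul_dotProduct, smul_eq_mul, d5]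
        rw [horth']; ring
      have hJw : Jm.mulVec w = -η - t • Jm.mulVec ξ := by
        rw [hw, mulVec_sub, mulVec_smul, JJvec]
      refine ⟨s⁻¹ • w, ?_, ?_, ?_, ?_, ?_⟩
      · rw [smul_dotProduct, dotProduct_smul, smul_eq_mul, smul_eq_mul, hww, ← hs2]
        field_simp
      · rw [dotProduct_smul, smul_eq_mul, hξw, mul_zero]
      · rw [dotProduct_smul, smul_eq_mul, hJξw, mul_zero]
      · rw [smul_dotProduct, smul_eq_mul, hwη, mul_zero]
      · rw [mulVec_smul, smul_dotProduct, smul_eq_mul, hJw, sub_dotProduct,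
          neg_dotProduct, smul_dotProduct, smul_eq_mul, hη, d7]
        have : (-1 - t * -t) = -(s ^ 2) := by rw [hs2]; ring
        rw [this]
        field_simp
  obtain ⟨u, hu1, hu2, hu3, hu4, hu5⟩ := hu
  -- derived dot products
  have g1 : u ⬝ᵥ ξ = 0 := by rw [dotProduct_comm]; exact hu2
  have g2 : Jm.mulVec ξ ⬝ᵥ Jm.mulVec ξ = 1 := by rw [J_iso]; exact hξ
  have g3 : ξ ⬝ᵥ Jm.mulVec ξ = 0 := antisym_quad Jm hJT ξ
  have g3' : Jm.mulVec ξ ⬝ᵥ ξ = 0 := by rw [dotProduct_comm]; exact g3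
  have g4 : ξ ⬝ᵥ Jm.mulVec u = 0 := by rw [J_skew, hu3, neg_zero]
  have g4' : Jm.mulVec u ⬝ᵥ ξ = 0 := by rw [dotProduct_comm]; exact g4
  have g5 : u ⬝ᵥ Jm.mulVec ξ = 0 := by rw [dotProduct_comm]; exact hu3
  have g6 : Jm.mulVec ξ ⬝ᵥ Jm.mulVec u = 0 := by rw [J_iso]; exact hu2
  have g6' : Jm.mulVec u ⬝ᵥ Jm.mulVec ξ = 0 := by rw [J_iso]; exact g1
  have g7 : u ⬝ᵥ Jm.mulVec u = 0 := antisym_quad Jm hJT u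
  have g7' : Jm.mulVec u ⬝ᵥ u = 0 := by rw [dotProduct_comm]; exact g7
  have g8 : Jm.mulVec u ⬝ᵥ Jm.mulVec u = 1 := by rw [J_iso]; exact hu1
  -- the passive transformation
  set K : Matrix n4 n4 ℝ :=
    vecMulVec ξ a + vecMulVec (Jm.mulVec ξ) a2 + vecMulVec u b + vecMulVec (Jm.mulVec u) b2
    with hK
  have hKT : Kᵀ = vecMulVec a ξ + vecMulVec a2 (Jm.mulVec ξ) + vecMulVec b u +
      vecMulVec b2 (Jm.mulVec u) := by
    rw [hK]
    simp only [transpose_add, transpose_vmv]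
  have hKK : Kᵀ * K = 1 := by
    rw [hKT, hK]
    simp only [add_mul, mul_add, vmv_mul_vmv]
    rw [hξ, g3, hu2, g4, g3', g2, hu3, g6, g1, g5, hu1, g7, g4', g6', g7', g8]
    simp only [one_smul, zero_smul, add_zero, zero_add]
    exact hcomp
  have hcomm : Jm * K = K * Jm := by
    rw [hK]
    simp only [Matrix.mul_add, Matrix.add_mul, mul_vmv, vmv_mul, hJT, neg_mulVec,
      vmv_neg_right, hJa, hJb, JJvec, vmv_neg_left, hJa2, hJb2]
    abel
  have hKx : Kᵀ.mulVec ξ = a := by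
    rw [hKT]
    simp only [add_mulVec, vmv_mulVec, hξ, g3', g1, g4']
    simp
  have hKe : Kᵀ.mulVec η = (-t) • a2 + (-s) • b2 := by
    rw [hKT]
    simp only [add_mulVec, vmv_mulVec, horth', d7, hu4, hu5]
    simp only [zero_smul, zero_add, add_zero, neg_smul]
  refine ⟨K, ?_, hKK, ?_⟩
  · rw [mul_assoc, hcomm, ← mul_assoc, hKK, one_mul]
  · rw [← Matrix.mulVec_mulVec, ← Matrix.mulVec_mulVec, hKx, hSta,
      dotProduct_mulVec, ← mulVec_transpose, hKe]
    simp only [add_dotProduct, smul_dotProduct, smul_eq_mul, ha2, hb2v]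
    simp [dotProduct, Fintype.sum_sum_type, Fin.sum_univ_two]
    linear_combination t * hct - s * hs + hs2
end

section
/- Let Ψ = (1,0)^T ∈ ℂ^2 and let Φ ∈ ℂ^2 be any unit vector with Re[⟨Φ, Ψ⟩] = 0. Then there exist angles γ, α and a 2×2 unitary U = [[e^{−iα} cos γ, −e^{−iα} sin γ],[e^{iα} sin γ, e^{iα} cos γ]] such that Im[⟨Φ, U E U† Ψ⟩] = 1, where E = diag(1, −1). -/
open Matrix Complex

lemma beam_splitter_unitary (γ α : ℝ) :
    !![Complex.exp (-Complex.I * α) * Real.cos γ,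
       -(Complex.exp (-Complex.I * α) * Real.sin γ);
       Complex.exp (Complex.I * α) * Real.sin γ,
       Complex.exp (Complex.I * α) * Real.cos γ] ∈ Matrix.unitaryGroup (Fin 2) ℂ := by
  have he : Complex.exp (Complex.I * α) * Complex.exp (-(Complex.I * α)) = 1 := by
    rw [← Complex.exp_add]; simp
  have hc : Complex.cos (γ : ℂ) ^ 2 + Complex.sin (γ : ℂ) ^ 2 = 1 := by
    rw [add_comm]; exact Complex.sin_sq_add_cos_sq _
  have hcc : (starRingEnd ℂ) (Complex.cos (γ : ℂ)) = Complex.cos (γ : ℂ) := by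
    rw [← Complex.cos_conj, Complex.conj_ofReal]
  have hsc : (starRingEnd ℂ) (Complex.sin (γ : ℂ)) = Complex.sin (γ : ℂ) := by
    rw [← Complex.sin_conj, Complex.conj_ofReal]
  rw [Matrix.mem_unitaryGroup_iff']
  ext i j
  fin_cases i <;> fin_cases j <;>
    simp [Matrix.mul_apply, Fin.sum_univ_two, Matrix.one_apply,
      Matrix.conjTranspose_apply, ← Complex.exp_conj, _root_.map_mul,
      Complex.conj_I, Complex.conj_ofReal, hcc, hsc]
  · linear_combination (Complex.cos (γ : ℂ)^2 + Complex.sin (γ : ℂ)^2) * he + hc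
  · ring
  · ring
  · linear_combination (Complex.cos (γ : ℂ)^2 + Complex.sin (γ : ℂ)^2) * he + hc

/-- For `Ψ = (1,0)ᵀ ∈ ℂ²` and any unit vector `Φ ∈ ℂ²` with
`Re⟨Φ, Ψ⟩ = 0`, there exist angles `γ, α` such that the unitary
`U = [[e^{−iα} cos γ, −e^{−iα} sin γ],[e^{iα} sin γ, e^{iα} cos γ]]` satisfies
`Im⟨Φ, U E U† Ψ⟩ = 1`, where `E = diag(1, −1)`. -/
theorem exists_beam_splitter_phase_achieving_one
    (Ψ Φ : Fin 2 → ℂ) (hΨ : Ψ = ![1, 0])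
    (hΦunit : (star Φ) ⬝ᵥ Φ = 1)
    (hRe : ((star Φ) ⬝ᵥ Ψ).re = 0)
    (E : Matrix (Fin 2) (Fin 2) ℂ) (hE : E = Matrix.diagonal ![1, -1]) :
    ∃ (γ α : ℝ) (U : Matrix (Fin 2) (Fin 2) ℂ),
      U = !![Complex.exp (-Complex.I * α) * Real.cos γ,
             -(Complex.exp (-Complex.I * α) * Real.sin γ);
             Complex.exp (Complex.I * α) * Real.sin γ,
             Complex.exp (Complex.I * α) * Real.cos γ] ∧
      U ∈ Matrix.unitaryGroup (Fin 2) ℂ ∧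
      ((star Φ) ⬝ᵥ (U * E * Uᴴ).mulVec Ψ).im = 1 := by
  subst hΨ hE
  set t : ℝ := (Φ 0).im with ht_def
  -- real part of Φ 0 is zero
  have hre0 : (Φ 0).re = 0 := by
    simpa [dotProduct, Fin.sum_univ_two] using hRe
  -- norm condition
  have ht_real : t ^ 2 + Complex.normSq (Φ 1) = 1 := by
    have h := hΦunit
    simp only [dotProduct, Fin.sum_univ_two, Pi.star_apply, RCLike.star_def] at h
    have h0 : (starRingEnd ℂ) (Φ 0) * Φ 0 = (Complex.normSq (Φ 0) : ℂ) := by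
      rw [mul_comm]; exact Complex.mul_conj _
    have h1 : (starRingEnd ℂ) (Φ 1) * Φ 1 = (Complex.normSq (Φ 1) : ℂ) := by
      rw [mul_comm]; exact Complex.mul_conj _
    rw [h0, h1] at h
    have h' : Complex.normSq (Φ 0) + Complex.normSq (Φ 1) = 1 := by exact_mod_cast h
    have : Complex.normSq (Φ 0) = t ^ 2 := by
      simp [Complex.normSq_apply, hre0, ht_def, sq]
    linarith [this ▸ h']
  have htsq : t ^ 2 ≤ 1 := by
    nlinarith [Complex.normSq_nonneg (Φ 1)]
  have hta : -1 ≤ -t ∧ -t ≤ 1 := by constructor <;> nlinarith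
  set γ : ℝ := Real.arccos (-t) / 2 with hγ_def
  set α : ℝ := Complex.arg (Complex.I * Φ 1) / 2 with hα_def
  refine ⟨γ, α, _, rfl, beam_splitter_unitary γ α, ?_⟩
  have hγ2 : 2 * γ = Real.arccos (-t) := by rw [hγ_def]; ring
  have hcos2 : Real.cos (2 * γ) = -t := by rw [hγ2, Real.cos_arccos hta.1 hta.2]
  have hsin2 : Real.sin (2 * γ) = Real.sqrt (1 - t ^ 2) := by
    rw [hγ2, Real.sin_arccos]; ring_nf
  have habs : Real.sqrt (1 - t ^ 2) = ‖Φ 1‖ := by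
    rw [Complex.norm_def]; congr 1; linarith
  -- complex double-angle facts
  have hc2 : Complex.cos (γ : ℂ) ^ 2 - Complex.sin (γ : ℂ) ^ 2 = -(t : ℂ) := by
    have hr : Real.cos γ ^ 2 - Real.sin γ ^ 2 = -t := by
      have h := Real.cos_two_mul γ
      rw [hcos2] at h
      have hp := Real.sin_sq_add_cos_sq γ
      linarith
    rw [← Complex.ofReal_cos, ← Complex.ofReal_sin]
    exact_mod_cast congrArg (Complex.ofReal) hr
  have hs2 : 2 * Complex.sin (γ : ℂ) * Complex.cos (γ : ℂ) = (‖Φ 1‖ : ℂ) := by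
    have hr : 2 * Real.sin γ * Real.cos γ = ‖Φ 1‖ := by
      rw [← Real.sin_two_mul, hsin2, habs]
    rw [← Complex.ofReal_cos, ← Complex.ofReal_sin]
    exact_mod_cast congrArg (Complex.ofReal) hr
  -- phase fact
  have hA2 : Complex.exp (Complex.I * α) * Complex.exp (Complex.I * α) *
      (‖Φ 1‖ : ℂ) = Complex.I * Φ 1 := by
    have h := Complex.norm_mul_exp_arg_mul_I (Complex.I * Φ 1)
    have habsI : ‖Complex.I * Φ 1‖ = ‖Φ 1‖ := by
      simp
    rw [habsI] at h
    rw [← Complex.exp_add]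
    have : Complex.I * (α : ℂ) + Complex.I * (α : ℂ)
        = (Complex.arg (Complex.I * Φ 1) : ℂ) * Complex.I := by
      rw [hα_def]; push_cast; ring
    rw [this, mul_comm]
    exact h
  have h0 : (starRingEnd ℂ) (Φ 0) = -(t : ℂ) * Complex.I := by
    apply Complex.ext <;> simp [hre0, ht_def]
  have h1 : (starRingEnd ℂ) (Φ 1) * Φ 1 = (Complex.normSq (Φ 1) : ℂ) := by
    rw [mul_comm]; exact Complex.mul_conj _
  have htC : (t : ℂ) ^ 2 + (Complex.normSq (Φ 1) : ℂ) = 1 := by exact_mod_cast ht_real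
  have he : Complex.exp (Complex.I * α) * Complex.exp (-(Complex.I * α)) = 1 := by
    rw [← Complex.exp_add]; simp
  have hcc : (starRingEnd ℂ) (Complex.cos (γ : ℂ)) = Complex.cos (γ : ℂ) := by
    rw [← Complex.cos_conj, Complex.conj_ofReal]
  have hsc : (starRingEnd ℂ) (Complex.sin (γ : ℂ)) = Complex.sin (γ : ℂ) := by
    rw [← Complex.sin_conj, Complex.conj_ofReal]
  have key : (star Φ) ⬝ᵥ ((!![Complex.exp (-Complex.I * α) * Real.cos γ,
             -(Complex.exp (-Complex.I * α) * Real.sin γ);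
             Complex.exp (Complex.I * α) * Real.sin γ,
             Complex.exp (Complex.I * α) * Real.cos γ] : Matrix (Fin 2) (Fin 2) ℂ)
          * Matrix.diagonal ![1, -1] *
          (!![Complex.exp (-Complex.I * α) * Real.cos γ,
             -(Complex.exp (-Complex.I * α) * Real.sin γ);
             Complex.exp (Complex.I * α) * Real.sin γ,
             Complex.exp (Complex.I * α) * Real.cos γ])ᴴ).mulVec ![1, 0] = Complex.I := by
    simp only [Matrix.mulVec, dotProduct, Fin.sum_univ_two, Matrix.mul_apply,
      Matrix.vecMul, Matrix.conjTranspose_apply]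
    simp [Matrix.mulVec, dotProduct, Fin.sum_univ_two, Matrix.mul_apply,
      Matrix.vecMul, Matrix.conjTranspose_apply, ← Complex.exp_conj, _root_.map_mul,
      Complex.conj_I, Complex.conj_ofReal, hcc, hsc]
    linear_combination ((starRingEnd ℂ) (Φ 0) * (Complex.exp (Complex.I * α) *
        Complex.exp (-(Complex.I * α)))) * hc2
      + ((starRingEnd ℂ) (Φ 1) * Complex.exp (Complex.I * α) * Complex.exp (Complex.I * α)) * hs2
      + (starRingEnd ℂ) (Φ 1) * hA2
      + Complex.I * h1
      + (-(t : ℂ) * Complex.exp (Complex.I * α) * Complex.exp (-(Complex.I * α))) * h0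
      + ((t : ℂ) ^ 2 * Complex.I) * he
      + Complex.I * htC
  rw [key]
  simp
end

section
/- Let Γ be a 4×4 real symmetric covariance matrix of a two-mode Gaussian state satisfying Γ + iσ ≥ 0. Then the product s_1 s_2 of the two symplectic eigenvalues of the partially transposed matrix Γ̃ = (I_2 ⊕ E)Γ(I_2 ⊕ E) satisfies (s_1 s_2)^2 = det Γ ≥ 1; consequently at most one symplectic eigenvalue of Γ̃ is less than 1. -/
open Matrix Polynomial
open scoped ComplexOrder

open scoped MatrixOrder in
lemma aux_abs_det_le {n : Type*} [Fintype n] [DecidableEq n] {A H : Matrix n n ℂ}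
    (hA : A.PosDef) (hH : H.IsHermitian)
    (h1 : (A + H).PosSemidef) (h2 : (A - H).PosSemidef) :
    ‖H.det‖ ≤ ‖A.det‖ := by
  have hAsd := hA.posSemidef
  set B := CFC.sqrt A with hBdef
  have hBpsd : B.PosSemidef := (CFC.sqrt_nonneg A).posSemidef
  have hBherm := hBpsd.isHermitian
  have hBB : B * B = A := CFC.sqrt_mul_sqrt_self A hAsd.nonneg
  have hdetA : A.det ≠ 0 := hA.det_pos.ne'
  have hdetB : IsUnit B.det := by
    apply isUnit_iff_ne_zero.mpr
    intro h
    apply hdetA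
    rw [← hBB, det_mul, h, zero_mul]
  have hBiB : B⁻¹ * B = 1 := nonsing_inv_mul _ hdetB
  have hBBi : B * B⁻¹ = 1 := mul_nonsing_inv _ hdetB
  have hBinvH : B⁻¹ᴴ = B⁻¹ := by rw [conjTranspose_nonsing_inv, hBherm.eq]
  set K := B⁻¹ * H * B⁻¹ with hKdef
  have hK : K.IsHermitian := by
    rw [IsHermitian, hKdef, conjTranspose_mul, conjTranspose_mul, hBinvH, hH.eq, mul_assoc]
  have hid : B⁻¹ * A * B⁻¹ = 1 := by
    rw [← hBB, ← mul_assoc B⁻¹ B B, hBiB, one_mul, hBBi]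
  have hP : (1 + K).PosSemidef := by
    have := h1.mul_mul_conjTranspose_same B⁻¹
    rw [hBinvH] at this
    convert this using 1
    rw [mul_add, add_mul, hKdef, hid]
  have hQ : (1 - K).PosSemidef := by
    have := h2.mul_mul_conjTranspose_same B⁻¹
    rw [hBinvH] at this
    convert this using 1
    rw [mul_sub, sub_mul, hKdef, hid]
  have hbound : ∀ i, |hK.eigenvalues i| ≤ 1 := by
    intro i
    set v : n → ℂ := ⇑(hK.eigenvectorBasis i) with hv
    have hnorm : RCLike.re (dotProduct (star v) v) = 1 := by
      have h := hK.eigenvectorBasis.orthonormal.1 i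
      have : (dotProduct (star v) v) = ((1:ℝ) : ℂ) := by
        rw [hv, dotProduct_comm, ← EuclideanSpace.inner_eq_star_dotProduct]
        rw [@inner_self_eq_norm_sq_to_K ℂ]
        rw [h]
        norm_num
      rw [this]
      simp
    have hμ := hK.eigenvalues_eq i
    have hp := hP.re_dotProduct_nonneg v
    have hq := hQ.re_dotProduct_nonneg v
    rw [add_mulVec, one_mulVec, dotProduct_add, map_add, hnorm, ← hμ] at hp
    rw [sub_mulVec, one_mulVec, dotProduct_sub, map_sub, hnorm, ← hμ] at hq
    rw [abs_le]; constructor <;> linarith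
  have hdetK : K.det = H.det * (A.det)⁻¹ := by
    rw [hKdef, det_mul, det_mul, det_nonsing_inv, Ring.inverse_eq_inv, ← hBB, det_mul]
    field_simp
  have hdetK2 : ‖K.det‖ ≤ 1 := by
    rw [hK.det_eq_prod_eigenvalues, norm_prod]
    apply Finset.prod_le_one
    · intro i _; exact norm_nonneg _
    · intro i _
      simpa [Complex.norm_real] using hbound i
  rw [hdetK, norm_mul, norm_inv] at hdetK2
  have hAd : 0 < ‖A.det‖ := by
    simpa using (norm_pos_iff.mpr hdetA)
  calc ‖H.det‖ = (‖H.det‖ * (‖A.det‖)⁻¹) * ‖A.det‖ := by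
        field_simp
    _ ≤ 1 * ‖A.det‖ := by
        apply mul_le_mul_of_nonneg_right hdetK2 hAd.le
    _ = ‖A.det‖ := one_mul _

/-- For a 4×4 two-mode covariance matrix `Γ` (real symmetric, `Γ + iσ ≥ 0`),
the symplectic eigenvalues `s1, s2` of the partial transpose `Γ̃ = (I⊕E)Γ(I⊕E)` (each
a doubly degenerate square root of the eigenvalues of `−(Γ̃σ)²`, encoded via the
characteristic polynomial) satisfy `(s1 s2)² = det Γ ≥ 1`; hence not both `s1, s2` can be
less than 1. -/
theorem two_mode_partial_transpose_symplectic_product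
    (σ : Matrix (Fin 2 ⊕ Fin 2) (Fin 2 ⊕ Fin 2) ℝ)
    (hσ : σ = Matrix.fromBlocks 0 1 (-1) 0)
    (E : Matrix (Fin 2) (Fin 2) ℝ) (hE : E = Matrix.diagonal ![1, -1])
    (Γ : Matrix (Fin 2 ⊕ Fin 2) (Fin 2 ⊕ Fin 2) ℝ)
    (hΓsymm : Γ.IsSymm)
    (hΓcov : (Γ.map Complex.ofReal + Complex.I • σ.map Complex.ofReal).PosSemidef)
    (Γt : Matrix (Fin 2 ⊕ Fin 2) (Fin 2 ⊕ Fin 2) ℝ)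
    (hΓt : Γt = (Matrix.fromBlocks 1 0 0 E) * Γ * (Matrix.fromBlocks 1 0 0 E))
    (s1 s2 : ℝ) (hs1 : 0 ≤ s1) (hs2 : 0 ≤ s2)
    (hchar : (-((Γt * σ) ^ 2)).charpoly =
      (X - C (s1 ^ 2)) ^ 2 * (X - C (s2 ^ 2)) ^ 2) :
    (s1 * s2) ^ 2 = Γ.det ∧ 1 ≤ Γ.det ∧ ¬(s1 < 1 ∧ s2 < 1) := by
  have hcard : Fintype.card (Fin 2 ⊕ Fin 2) = 4 := by simp
  set A := Γ.map Complex.ofReal with hAdef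
  set S := σ.map Complex.ofReal with hSdef
  set H := Complex.I • S with hHdef
  -- sigma facts
  have hσT : σᵀ = -σ := by
    rw [hσ, fromBlocks_transpose, fromBlocks_neg]
    simp
  have hσσ : σ * σ = -1 := by
    have hone : (-1 : Matrix (Fin 2 ⊕ Fin 2) (Fin 2 ⊕ Fin 2) ℝ)
        = fromBlocks (-1) (-0) (-0) (-1) := by
      rw [← fromBlocks_one]
      exact fromBlocks_neg _ _ _ _
    rw [hσ, fromBlocks_multiply, hone]
    simp
  have hdσ2 : σ.det * σ.det = 1 := by
    have := congrArg Matrix.det hσσ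
    rw [det_mul, det_neg, det_one, hcard] at this
    norm_num at this
    exact this
  have hσa : ∀ i j, σ j i = -σ i j := by
    intro i j
    have := congrFun (congrFun hσT i) j
    simpa [transpose_apply] using this
  have hΓa : ∀ i j, Γ j i = Γ i j := by
    intro i j
    have := congrFun (congrFun hΓsymm.eq i) j
    simpa [transpose_apply] using this
  -- S and A facts
  have hST : Sᵀ = -S := by
    ext i j
    simp [hSdef, transpose_apply, hσa i j]
  have hSH : Sᴴ = -S := by
    ext i j
    simp [hSdef, conjTranspose_apply, Complex.conj_ofReal, hσa i j]
  have hAH : Aᴴ = A := by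
    ext i j
    simp [hAdef, conjTranspose_apply, Complex.conj_ofReal, hΓa i j]
  have hAT : Aᵀ = A := by
    ext i j
    simp [hAdef, transpose_apply, hΓa i j]
  have hAherm : A.IsHermitian := hAH
  have hHherm : H.IsHermitian := by
    rw [IsHermitian, hHdef, conjTranspose_smul, hSH, Complex.star_def, Complex.conj_I]
    simp
  have h1 : (A + H).PosSemidef := hΓcov
  have h2 : (A - H).PosSemidef := by
    have := h1.transpose
    have he : (A + H)ᵀ = A - H := by
      rw [transpose_add, hAT, hHdef, transpose_smul, hST, smul_neg, sub_eq_add_neg]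
    rwa [he] at this
  -- S invertibility
  have hdetS : S.det = (σ.det : ℂ) := by
    rw [hSdef]
    exact (RingHom.map_det Complex.ofRealHom σ).symm
  have hSdet_ne : S.det ≠ 0 := by
    rw [hdetS]
    intro h
    have : σ.det = 0 := by exact_mod_cast h
    rw [this, zero_mul] at hdσ2
    norm_num at hdσ2
  -- A is positive definite
  have hApd : A.PosDef := by
    refine PosDef.of_dotProduct_mulVec_pos hAherm (fun x hx => ?_)
    have hq1 := h1.dotProduct_mulVec_nonneg x
    have hq2 := h2.dotProduct_mulVec_nonneg x
    have hge : 0 ≤ star x ⬝ᵥ A *ᵥ x := by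
      have hsum : star x ⬝ᵥ (A + H) *ᵥ x + star x ⬝ᵥ (A - H) *ᵥ x
          = star x ⬝ᵥ A *ᵥ x + star x ⬝ᵥ A *ᵥ x := by
        rw [add_mulVec, sub_mulVec, dotProduct_add, dotProduct_sub]
        ring
      have h0 : 0 ≤ star x ⬝ᵥ A *ᵥ x + star x ⬝ᵥ A *ᵥ x := hsum ▸ add_nonneg hq1 hq2
      rw [Complex.le_def] at h0 ⊢
      simp only [Complex.add_re, Complex.add_im, Complex.zero_re, Complex.zero_im] at h0 ⊢
      exact ⟨by linarith [h0.1], by linarith [h0.2]⟩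
    rcases lt_or_eq_of_le hge with h | h
    · exact h
    · exfalso
      -- star x ⬝ᵥ A x = 0
      have hz1 : star x ⬝ᵥ (A + H) *ᵥ x = 0 ∧ star x ⬝ᵥ (A - H) *ᵥ x = 0 := by
        have hsum : star x ⬝ᵥ (A + H) *ᵥ x + star x ⬝ᵥ (A - H) *ᵥ x = 0 := by
          rw [add_mulVec, sub_mulVec, dotProduct_add, dotProduct_sub, ← h.symm]
          ring_nf
          rw [← h]
          ring
        constructor
        · by_contra hne
          have hlt : 0 < star x ⬝ᵥ (A + H) *ᵥ x := lt_of_le_of_ne hq1 (Ne.symm hne)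
          have : 0 < star x ⬝ᵥ (A + H) *ᵥ x + star x ⬝ᵥ (A - H) *ᵥ x :=
            add_pos_of_pos_of_nonneg hlt hq2
          rw [hsum] at this
          exact lt_irrefl _ this
        · by_contra hne
          have hlt : 0 < star x ⬝ᵥ (A - H) *ᵥ x := lt_of_le_of_ne hq2 (Ne.symm hne)
          have : 0 < star x ⬝ᵥ (A + H) *ᵥ x + star x ⬝ᵥ (A - H) *ᵥ x :=
            add_pos_of_nonneg_of_pos hq1 hlt
          rw [hsum] at this
          exact lt_irrefl _ this
      have hv1 : (A + H) *ᵥ x = 0 := (h1.dotProduct_mulVec_zero_iff x).mp hz1.1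
      have hv2 : (A - H) *ᵥ x = 0 := (h2.dotProduct_mulVec_zero_iff x).mp hz1.2
      have hHx : H *ᵥ x + H *ᵥ x = 0 := by
        have : ((A + H) - (A - H)) *ᵥ x = 0 := by
          rw [sub_mulVec, hv1, hv2, sub_zero]
        have he : (A + H) - (A - H) = H + H := by abel
        rw [he, add_mulVec] at this
        exact this
      have hHx0 : H *ᵥ x = 0 := by
        funext i
        have := congrFun hHx i
        simp only [Pi.add_apply, Pi.zero_apply] at this
        exact add_self_eq_zero.mp this
      have hSx0 : S *ᵥ x = 0 := by
        rw [hHdef, smul_mulVec] at hHx0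
        exact (smul_eq_zero_iff_right Complex.I_ne_zero).mp hHx0
      have hx0 : x = 0 := by
        have hinv : S⁻¹ * S = 1 := nonsing_inv_mul _ (isUnit_iff_ne_zero.mpr hSdet_ne)
        calc x = (S⁻¹ * S) *ᵥ x := by rw [hinv, one_mulVec]
          _ = S⁻¹ *ᵥ (S *ᵥ x) := by rw [mulVec_mulVec]
          _ = 0 := by rw [hSx0, mulVec_zero]
      exact hx hx0
  -- determinant facts
  have hdetA : A.det = (Γ.det : ℂ) := by
    rw [hAdef]
    exact (RingHom.map_det Complex.ofRealHom Γ).symm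
  have hΓpos : 0 < Γ.det := by
    have := hApd.det_pos
    rw [hdetA] at this
    exact Complex.zero_lt_real.mp this
  -- apply aux lemma
  have hHdet1 : ‖H.det‖ = 1 := by
    rw [hHdef, det_smul, hcard, hdetS]
    have : Complex.I ^ 4 = 1 := by
      rw [show (4:ℕ) = 2*2 from rfl, pow_mul, Complex.I_sq]
      norm_num
    rw [this, one_mul, Complex.norm_real, Real.norm_eq_abs]
    rcases mul_self_eq_one_iff.mp hdσ2 with h | h <;> rw [h] <;> norm_num
  have hge1 : 1 ≤ Γ.det := by
    have := aux_abs_det_le hApd hHherm h1 h2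
    rw [hHdet1, hdetA, Complex.norm_real, Real.norm_eq_abs, abs_of_pos hΓpos] at this
    exact this
  -- charpoly part
  have hdetF : (Matrix.fromBlocks 1 0 0 E : Matrix (Fin 2 ⊕ Fin 2) (Fin 2 ⊕ Fin 2) ℝ).det = -1 := by
    rw [det_fromBlocks_zero₂₁, hE, det_one, det_diagonal, Fin.prod_univ_two]
    norm_num
  have hdetΓt : Γt.det = Γ.det := by
    rw [hΓt, det_mul, det_mul, hdetF]
    ring
  have hL : (-((Γt * σ)^2)).det = Γ.det ^ 2 := by
    rw [det_neg, det_pow, det_mul, hdetΓt, hcard]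
    linear_combination (Γ.det ^ 2) * hdσ2
  have hkey : Γ.det ^ 2 = s1 ^ 4 * s2 ^ 4 := by
    have h0 := congrArg (fun p : Polynomial ℝ => p.coeff 0) hchar
    simp only [coeff_zero_eq_eval_zero, eval_mul, eval_pow, eval_sub, eval_X, eval_C] at h0
    have hL2 : (-((Γt * σ)^2)).det = (-((Γt * σ)^2)).charpoly.coeff 0 := by
      rw [det_eq_sign_charpoly_coeff, hcard]
      norm_num
    rw [coeff_zero_eq_eval_zero] at hL2
    rw [← hL, hL2, h0]
    ring
  have part1 : (s1 * s2) ^ 2 = Γ.det := by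
    have hfac : ((s1*s2)^2 - Γ.det) * ((s1*s2)^2 + Γ.det) = 0 := by
      linear_combination -hkey
    rcases mul_eq_zero.mp hfac with h | h
    · linarith
    · nlinarith [sq_nonneg (s1*s2)]
  refine ⟨part1, hge1, ?_⟩
  rintro ⟨ha, hb⟩
  have h3 : s1 * s2 < 1 := by nlinarith
  have h4 : (s1 * s2) ^ 2 < 1 := by nlinarith [mul_nonneg hs1 hs2]
  linarith [hge1, part1.symm.le, h4]
end
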